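/- There exists a constant C > 0 such that for every integer n ≥ 1, the series Σ_{j=0}^∞ [1 - (1 - 2^{-j})^n] converges and | Σ_{j=0}^∞ [1 - (1 - 2^{-j})^n] - ln(n)/ln(2) | ≤ C. -/

import Mathlib

open Real Finset

lemma aux_base_nonneg (j : ℕ) : (0:ℝ) ≤ 1 - (1/2:ℝ)^j := by
  have : (1/2:ℝ)^j ≤ 1 := pow_le_one₀ (by norm_num) (by norm_num)
  linarith

lemma aux_term_nonneg (n j : ℕ) : (0:ℝ) ≤ 1 - (1 - (1/2:ℝ)^j)^n := by
  have h1 : (1 - (1/2:ℝ)^j)^n ≤ 1 :=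
    pow_le_one₀ (aux_base_nonneg j) (by linarith [pow_nonneg (by norm_num : (0:ℝ) ≤ 1/2) j])
  linarith

lemma aux_term_le_one (n j : ℕ) : 1 - (1 - (1/2:ℝ)^j)^n ≤ 1 := by
  have := pow_nonneg (aux_base_nonneg j) n
  linarith

lemma aux_term_le (n j : ℕ) : 1 - (1 - (1/2:ℝ)^j)^n ≤ n * (1/2:ℝ)^j := by
  have h := one_add_mul_le_pow (a := -(1/2:ℝ)^j) (by linarith [pow_le_one₀ (by norm_num : (0:ℝ) ≤ (1/2:ℝ)) (by norm_num : (1/2:ℝ) ≤ 1) (n := j)]) n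
  simp only [mul_neg] at h
  have : 1 - (n:ℝ) * (1/2)^j ≤ (1 - (1/2:ℝ)^j)^n := by
    calc (1:ℝ) - n * (1/2)^j = 1 + -(n * (1/2)^j) := by ring
    _ ≤ (1 + -(1/2:ℝ)^j)^n := h
    _ = (1 - (1/2:ℝ)^j)^n := by ring_nf
  linarith

theorem statement15 :
    ∃ C : ℝ, 0 < C ∧ ∀ n : ℕ, 1 ≤ n →
      (Summable fun j : ℕ => 1 - (1 - (1/2 : ℝ) ^ j) ^ n) ∧
      |(∑' j : ℕ, (1 - (1 - (1/2 : ℝ) ^ j) ^ n)) - Real.log n / Real.log 2| ≤ C := by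
  refine ⟨4, by norm_num, fun n hn => ?_⟩
  have hn0 : (0:ℝ) < n := by exact_mod_cast hn
  obtain ⟨m, hml, hmr⟩ : ∃ m : ℕ, 2^m ≤ n ∧ n < 2^(m+1) :=
    ⟨Nat.log 2 n, Nat.pow_log_le_self 2 (by omega), Nat.lt_pow_succ_log_self (by norm_num) n⟩
  -- summability
  have hs : Summable fun j : ℕ => 1 - (1 - (1/2 : ℝ) ^ j) ^ n := by
    apply Summable.of_nonneg_of_le (fun j => aux_term_nonneg n j) (fun j => aux_term_le n j)
    exact (summable_geometric_of_lt_one (by norm_num) (by norm_num)).mul_left _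
  refine ⟨hs, ?_⟩
  have h2m : (2:ℝ)^m ≤ n := by exact_mod_cast hml
  have h2m' : (n:ℝ) < 2^(m+1) := by exact_mod_cast hmr
  -- logb bounds
  have hlogb : Real.log n / Real.log 2 = Real.logb 2 n := rfl
  have hlb1 : (m:ℝ) ≤ Real.logb 2 n := by
    have := Real.logb_le_logb_of_le (b := 2) (by norm_num) (by positivity : (0:ℝ) < 2^m) h2m
    simpa [Real.logb_self_eq_one] using (by
      rw [Real.logb_pow] at this; simpa [Real.logb_self_eq_one] using this : (m:ℝ) ≤ Real.logb 2 n)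
  have hlb2 : Real.logb 2 n ≤ (m:ℝ) + 1 := by
    have := Real.logb_le_logb_of_le (b := 2) (by norm_num) hn0 h2m'.le
    rw [Real.logb_pow] at this
    simpa [Real.logb_self_eq_one] using this
  -- upper bound on tsum
  have hsplit := Summable.sum_add_tsum_nat_add (m+1) hs
  have htail : (∑' i : ℕ, (1 - (1 - (1/2:ℝ)^(i + (m+1)))^n)) ≤ 2 := by
    have hb : ∀ i : ℕ, 1 - (1 - (1/2:ℝ)^(i + (m+1)))^n ≤ (1/2:ℝ)^i := by
      intro i
      calc 1 - (1 - (1/2:ℝ)^(i + (m+1)))^n ≤ n * (1/2:ℝ)^(i + (m+1)) := aux_term_le _ _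
      _ ≤ (2:ℝ)^(m+1) * (1/2:ℝ)^(i+(m+1)) := by
          apply mul_le_mul_of_nonneg_right h2m'.le (by positivity)
      _ = (1/2:ℝ)^i := by
          have h1 : (2:ℝ)^(m+1) * (1/2:ℝ)^(m+1) = 1 := by
            rw [← mul_pow]; norm_num
          rw [pow_add (1/2:ℝ) i (m+1)]
          calc (2:ℝ)^(m+1) * ((1/2:ℝ)^i * (1/2:ℝ)^(m+1))
              = ((2:ℝ)^(m+1) * (1/2:ℝ)^(m+1)) * (1/2:ℝ)^i := by ring
            _ = (1/2:ℝ)^i := by rw [h1]; ring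
    calc (∑' i : ℕ, (1 - (1 - (1/2:ℝ)^(i + (m+1)))^n))
        ≤ ∑' i : ℕ, (1/2:ℝ)^i := by
          apply Summable.tsum_le_tsum hb ((summable_nat_add_iff (f := fun j : ℕ => 1 - (1 - (1/2:ℝ)^j)^n) (m+1)).2 hs)
          exact summable_geometric_of_lt_one (by norm_num) (by norm_num)
      _ = 2 := by rw [tsum_geometric_of_lt_one (by norm_num) (by norm_num)]; norm_num
  have hupper : (∑' j : ℕ, (1 - (1 - (1/2:ℝ)^j)^n)) ≤ (m:ℝ) + 3 := by
    rw [← hsplit]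
    have h1 : (∑ j ∈ Finset.range (m+1), (1 - (1 - (1/2:ℝ)^j)^n)) ≤ (m:ℝ) + 1 := by
      calc (∑ j ∈ Finset.range (m+1), (1 - (1 - (1/2:ℝ)^j)^n))
          ≤ ∑ _j ∈ Finset.range (m+1), (1:ℝ) :=
            Finset.sum_le_sum (fun j _ => aux_term_le_one n j)
        _ = (m:ℝ) + 1 := by simp
    linarith
  -- lower bound on tsum
  have hterm_lb : ∀ j, j < m + 1 →
      1 - Real.exp (-((m - j : ℕ) + 1)) ≤ 1 - (1 - (1/2:ℝ)^j)^n := by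
    intro j hj
    have key : (1 - (1/2:ℝ)^j)^n ≤ Real.exp (-((m - j : ℕ) + 1)) := by
      have h1 : (1 - (1/2:ℝ)^j) ≤ Real.exp (-(1/2:ℝ)^j) := by
        have := Real.add_one_le_exp (-(1/2:ℝ)^j)
        linarith
      calc (1 - (1/2:ℝ)^j)^n ≤ (Real.exp (-(1/2:ℝ)^j))^n :=
            pow_le_pow_left₀ (aux_base_nonneg j) h1 n
        _ = Real.exp (n * (-(1/2:ℝ)^j)) := (Real.exp_nat_mul _ n).symm
        _ ≤ Real.exp (-((m - j : ℕ) + 1)) := by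
            apply Real.exp_le_exp.2
            have hpow : ((m - j : ℕ) : ℝ) + 1 ≤ (2:ℝ)^(m - j) := by
              exact_mod_cast Nat.lt_two_pow_self (n := m - j)
            have h2 : (2:ℝ)^(m-j) ≤ (n:ℝ) * (1/2:ℝ)^j := by
              have : (2:ℝ)^(m-j) * (2:ℝ)^j = (2:ℝ)^m := by
                rw [← pow_add]; congr 1; omega
              have h3 : (2:ℝ)^m * (1/2:ℝ)^j = (2:ℝ)^(m-j) := by
                have h4 : (2:ℝ)^j * (1/2:ℝ)^j = 1 := by rw [← mul_pow]; norm_num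
                rw [← this, mul_assoc, h4, mul_one]
              rw [← h3]
              exact mul_le_mul_of_nonneg_right h2m (by positivity)
            nlinarith
    linarith
  have hexp_le : ∀ k : ℕ, Real.exp (-((k:ℝ) + 1)) ≤ (1/2:ℝ)^(k+1) := by
    intro k
    have h1 : Real.exp (-((k:ℝ)+1)) = (Real.exp (-1))^(k+1) := by
      rw [← Real.exp_nat_mul]; congr 1; push_cast; ring
    rw [h1]
    apply pow_le_pow_left₀ (le_of_lt (Real.exp_pos _))
    rw [Real.exp_neg]
    rw [inv_le_comm₀ (Real.exp_pos 1) (by norm_num)]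
    norm_num
    linarith [Real.add_one_le_exp (1:ℝ)]
  have hlower : (m:ℝ) ≤ ∑' j : ℕ, (1 - (1 - (1/2:ℝ)^j)^n) := by
    have hps : (∑ j ∈ Finset.range (m+1), (1 - (1 - (1/2:ℝ)^j)^n))
        ≤ ∑' j : ℕ, (1 - (1 - (1/2:ℝ)^j)^n) :=
      Summable.sum_le_tsum _ (fun j _ => aux_term_nonneg n j) hs
    have hs1 : (∑ j ∈ Finset.range (m+1), (1 - Real.exp (-(((m - j : ℕ):ℝ) + 1))))
        ≤ ∑ j ∈ Finset.range (m+1), (1 - (1 - (1/2:ℝ)^j)^n) :=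
      Finset.sum_le_sum (fun j hj => hterm_lb j (Finset.mem_range.1 hj))
    have hrefl : (∑ j ∈ Finset.range (m+1), Real.exp (-(((m - j : ℕ):ℝ) + 1)))
        = ∑ j ∈ Finset.range (m+1), Real.exp (-((j:ℝ) + 1)) := by
      rw [← Finset.sum_range_reflect (fun j => Real.exp (-((j:ℝ) + 1))) (m+1)]
      apply Finset.sum_congr rfl
      intro j hj
      have h5 : m + 1 - 1 - j = m - j := by omega
      rw [h5]
    have hsum_exp : (∑ j ∈ Finset.range (m+1), Real.exp (-((j:ℝ) + 1))) ≤ 1 := by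
      calc (∑ j ∈ Finset.range (m+1), Real.exp (-((j:ℝ) + 1)))
          ≤ ∑ j ∈ Finset.range (m+1), (1/2:ℝ)^(j+1) :=
            Finset.sum_le_sum (fun j _ => hexp_le j)
        _ ≤ ∑' j : ℕ, (1/2:ℝ)^(j+1) := by
            apply Summable.sum_le_tsum _ (fun j _ => by positivity)
            exact (summable_nat_add_iff 1).2
              (summable_geometric_of_lt_one (by norm_num) (by norm_num))
        _ ≤ 1 := by
            have : (∑' j : ℕ, (1/2:ℝ)^(j+1)) = (1/2) * ∑' j : ℕ, (1/2:ℝ)^j := by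
              rw [← tsum_mul_left]
              congr 1; funext j; rw [pow_succ]; ring
            rw [this, tsum_geometric_of_lt_one (by norm_num) (by norm_num)]
            norm_num
    have : (m:ℝ) ≤ ∑ j ∈ Finset.range (m+1), (1 - (1 - (1/2:ℝ)^j)^n) := by
      have hsum1 : (∑ j ∈ Finset.range (m+1), (1 - Real.exp (-(((m - j : ℕ):ℝ) + 1))))
          = ((m:ℝ) + 1) - ∑ j ∈ Finset.range (m+1), Real.exp (-(((m - j : ℕ):ℝ) + 1)) := by
        rw [Finset.sum_sub_distrib]
        simp
      rw [hsum1, hrefl] at hs1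
      linarith
    linarith
  rw [hlogb]
  rw [abs_le]
  constructor <;> linarith
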